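/- arXiv:2008.06129 — 2 statements merged into one kernel-verified Lean document; each statement's English description precedes it below -/
import Mathlib

section
/- Trace-type inequality: let $\Omega \subset \mathbb{R}^d$ be a bounded Lipschitz domain, $s \in (0,1)$, $\gamma \ge s$. There exists a constant $C > 0$ such that for all $v \in \mathbb{V}$, $\left(\int_{\mathbb{R}^d} \frac{|v(x)|^2}{1+|x|^{d+2\gamma}}\,dx\right)^{1/2} \le C\, \|v\|_{\mathbb{V}}$. Hence the embedding $\mathbb{V} \subset L^2_\gamma(\mathbb{R}^d)$ is continuous for all $\gamma \ge s$. -/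
open MeasureTheory
open scoped ENNReal

/-- The normalization constant of the fractional Laplacian. -/
noncomputable def Cds (d : ℕ) (s : ℝ) : ℝ :=
  2 ^ (2 * s) * s * Real.Gamma (s + d / 2) / (Real.pi ^ ((d : ℝ) / 2) * Real.Gamma (1 - s))

/-- The squared `𝕏`-seminorm `|v|_𝕏² = (C_{d,s}/2) ∬_{(ℝᵈ×ℝᵈ)∖(Ωᶜ×Ωᶜ)}
|v(x)-v(y)|²/|x-y|^{d+2s}`. -/
noncomputable def Xsemi2 (d : ℕ) (s : ℝ) (Ω : Set (EuclideanSpace ℝ (Fin d)))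
    (v : EuclideanSpace ℝ (Fin d) → ℝ) : ℝ≥0∞ :=
  ENNReal.ofReal (Cds d s / 2) *
    ∫⁻ p in (Set.univ ×ˢ Set.univ) \ (Ωᶜ ×ˢ Ωᶜ),
      ENNReal.ofReal (|v p.1 - v p.2| ^ 2 / ‖p.1 - p.2‖ ^ ((d : ℝ) + 2 * s))

/-- The squared `𝕍`-norm `‖v‖_𝕍² = ‖v‖²_{L²(Ω)} + |v|_𝕏²`. -/
noncomputable def Vnorm2 (d : ℕ) (s : ℝ) (Ω : Set (EuclideanSpace ℝ (Fin d)))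
    (v : EuclideanSpace ℝ (Fin d) → ℝ) : ℝ≥0∞ :=
  (∫⁻ x in Ω, ENNReal.ofReal (v x ^ 2)) + Xsemi2 d s Ω v

lemma aux_pow (p q t : ℝ) (hp : 0 < p) (hpq : p ≤ q) (ht : 0 ≤ t) :
    (1 + t) ^ p ≤ 2 ^ p * (1 + t ^ q) := by
  have h1 : (1 + t) ^ p ≤ (2 * max 1 t) ^ p := by
    apply Real.rpow_le_rpow (by linarith) _ hp.le
    rcases le_total t 1 with h | h
    · rw [max_eq_left h]; linarith
    · rw [max_eq_right h]; linarith
  have h2 : (2 * max 1 t) ^ p = 2 ^ p * (max 1 t) ^ p :=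
    Real.mul_rpow (by norm_num) (le_max_of_le_left zero_le_one)
  have h3 : (max 1 t) ^ p ≤ 1 + t ^ q := by
    rcases le_total t 1 with h | h
    · rw [max_eq_left h, Real.one_rpow]
      have : 0 ≤ t ^ q := Real.rpow_nonneg ht q
      linarith
    · rw [max_eq_right h]
      have : t ^ p ≤ t ^ q := Real.rpow_le_rpow_of_exponent_le h hpq
      have h4 : 0 < t ^ q := Real.rpow_pos_of_pos (by linarith) q
      linarith
  calc (1 + t) ^ p ≤ 2 ^ p * (max 1 t) ^ p := h1.trans_eq h2
    _ ≤ 2 ^ p * (1 + t ^ q) := by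
        have : (0:ℝ) < 2 ^ p := Real.rpow_pos_of_pos two_pos p
        nlinarith

lemma aux_Cds_pos (d : ℕ) (s : ℝ) (hs0 : 0 < s) (hs1 : s < 1) : 0 < Cds d s := by
  unfold Cds
  have h1 : (0:ℝ) < 2 ^ (2*s) := Real.rpow_pos_of_pos two_pos _
  have h2 : 0 < Real.Gamma (s + d / 2) := Real.Gamma_pos_of_pos (by positivity)
  have h3 : (0:ℝ) < Real.pi ^ ((d:ℝ)/2) := Real.rpow_pos_of_pos Real.pi_pos _
  have h4 : 0 < Real.Gamma (1 - s) := Real.Gamma_pos_of_pos (by linarith)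
  positivity

lemma aux_W (d : ℕ) (q : ℝ) (hq : (d:ℝ) < q) (hq0 : 0 < q) :
    (∫⁻ x : EuclideanSpace ℝ (Fin d), ENNReal.ofReal ((1 + ‖x‖ ^ q)⁻¹)) < ⊤ := by
  have hfin : (∫⁻ x : EuclideanSpace ℝ (Fin d), ENNReal.ofReal ((1 + ‖x‖) ^ (-q))) < ⊤ := by
    apply finite_integral_one_add_norm
    simpa using hq
  have hpt : ∀ x : EuclideanSpace ℝ (Fin d),
      ENNReal.ofReal ((1 + ‖x‖ ^ q)⁻¹) ≤
        ENNReal.ofReal (2 ^ q) * ENNReal.ofReal ((1 + ‖x‖) ^ (-q)) := by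
    intro x
    rw [← ENNReal.ofReal_mul (by positivity)]
    apply ENNReal.ofReal_le_ofReal
    have ht : (0:ℝ) ≤ ‖x‖ := norm_nonneg x
    have hb : (0:ℝ) < (1 + ‖x‖) ^ q := Real.rpow_pos_of_pos (by linarith) q
    have ha : (0:ℝ) < 1 + ‖x‖ ^ q := by positivity
    have key : (1 + ‖x‖) ^ q ≤ 2 ^ q * (1 + ‖x‖ ^ q) := aux_pow q q ‖x‖ hq0 le_rfl ht
    rw [Real.rpow_neg (by linarith), ← one_div, ← one_div, mul_one_div,
      div_le_div_iff₀ ha hb]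
    nlinarith
  calc (∫⁻ x : EuclideanSpace ℝ (Fin d), ENNReal.ofReal ((1 + ‖x‖ ^ q)⁻¹))
      ≤ ∫⁻ x : EuclideanSpace ℝ (Fin d),
          ENNReal.ofReal (2 ^ q) * ENNReal.ofReal ((1 + ‖x‖) ^ (-q)) := lintegral_mono hpt
    _ = ENNReal.ofReal (2 ^ q) *
          ∫⁻ x : EuclideanSpace ℝ (Fin d), ENNReal.ofReal ((1 + ‖x‖) ^ (-q)) := by
        apply lintegral_const_mul; fun_prop
    _ < ⊤ := ENNReal.mul_lt_top ENNReal.ofReal_lt_top hfin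

lemma aux_ptwise {E : Type*} [NormedAddCommGroup E] (pp qq K : ℝ)
    (v : E → ℝ) (x y : E) (hker : ‖x - y‖ ^ pp ≤ K * (1 + ‖x‖ ^ qq)) :
    |v x| ^ 2 / (1 + ‖x‖ ^ qq) ≤
      2 * K * (|v x - v y| ^ 2 / ‖x - y‖ ^ pp) + 2 * (1 + ‖x‖ ^ qq)⁻¹ * (v y) ^ 2 := by
  have hB : (0:ℝ) < 1 + ‖x‖ ^ qq := by positivity
  by_cases hxy : x = y
  · subst hxy
    have h1 : |v x| ^ 2 / (1 + ‖x‖ ^ qq) ≤ 2 * (1 + ‖x‖ ^ qq)⁻¹ * (v x) ^ 2 := by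
      rw [div_eq_mul_inv, sq_abs]
      have hB' : (0:ℝ) ≤ (1 + ‖x‖ ^ qq)⁻¹ := by positivity
      nlinarith [sq_nonneg (v x)]
    have h2 : (0:ℝ) ≤ 2 * K * (|v x - v x| ^ 2 / ‖x - x‖ ^ pp) := by
      rcases le_or_gt 0 K with hK | hK
      · positivity
      · simp
    linarith
  · have hn : (0:ℝ) < ‖x - y‖ := by
      rw [norm_pos_iff, sub_ne_zero]; exact hxy
    have hA : (0:ℝ) < ‖x - y‖ ^ pp := Real.rpow_pos_of_pos hn pp
    have htri : |v x| ^ 2 ≤ 2 * |v x - v y| ^ 2 + 2 * (v y) ^ 2 := by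
      have h1 : |v x| - |v y| ≤ |v x - v y| := abs_sub_abs_le_abs_sub _ _
      have h2 : (0:ℝ) ≤ |v x| := abs_nonneg _
      have h3 : (0:ℝ) ≤ |v y| := abs_nonneg _
      nlinarith [sq_nonneg (|v x - v y| - |v y|), sq_abs (v y), sq_abs (v x)]
    have step1 : |v x| ^ 2 / (1 + ‖x‖ ^ qq) ≤
        (2 * |v x - v y| ^ 2) / (1 + ‖x‖ ^ qq) + (2 * (v y) ^ 2) / (1 + ‖x‖ ^ qq) := by
      rw [← add_div]
      exact div_le_div_of_nonneg_right htri hB.le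
    have step2 : (2 * |v x - v y| ^ 2) / (1 + ‖x‖ ^ qq) ≤
        2 * K * (|v x - v y| ^ 2 / ‖x - y‖ ^ pp) := by
      rw [← mul_div_assoc, div_le_div_iff₀ hB hA]
      have ha : (0:ℝ) ≤ |v x - v y| ^ 2 := sq_nonneg _
      nlinarith
    have step3 : (2 * (v y) ^ 2) / (1 + ‖x‖ ^ qq) = 2 * (1 + ‖x‖ ^ qq)⁻¹ * (v y) ^ 2 := by
      rw [div_eq_mul_inv]; ring
    linarith

/-- Trace-type inequality: for `γ ≥ s` there is `C > 0` with
`‖v‖_{L²_γ(ℝᵈ)} ≤ C ‖v‖_𝕍` for all `v ∈ 𝕍`; hence `𝕍 ⊂ L²_γ(ℝᵈ)` continuously. -/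
theorem trace_type_inequality (d : ℕ) (hd : 0 < d) (s γ : ℝ) (hs : s ∈ Set.Ioo (0 : ℝ) 1)
    (hγ : s ≤ γ) (Ω : Set (EuclideanSpace ℝ (Fin d))) (hΩb : Bornology.IsBounded Ω)
    (hΩm : MeasurableSet Ω) (hΩpos : 0 < volume Ω) :
    ∃ C : ℝ, 0 < C ∧
      ∀ v : EuclideanSpace ℝ (Fin d) → ℝ, Measurable v → Vnorm2 d s Ω v < ⊤ →
        (∫⁻ x, ENNReal.ofReal (|v x| ^ 2 / (1 + ‖x‖ ^ ((d : ℝ) + 2 * γ)))) ^ (1 / (2 : ℝ)) ≤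
          ENNReal.ofReal C * (Vnorm2 d s Ω v) ^ (1 / (2 : ℝ)) := by
  obtain ⟨hs0, hs1⟩ := hs
  have hd0 : (0:ℝ) ≤ d := Nat.cast_nonneg d
  have hppos : (0:ℝ) < (d:ℝ) + 2 * s := by linarith
  have hqpos : (0:ℝ) < (d:ℝ) + 2 * γ := by linarith
  have hpq : (d:ℝ) + 2 * s ≤ (d:ℝ) + 2 * γ := by linarith
  have hdq : (d:ℝ) < (d:ℝ) + 2 * γ := by linarith
  obtain ⟨R0, hR0⟩ := hΩb.subset_closedBall 0
  set R : ℝ := max R0 1 with hRdef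
  have hR1 : (1:ℝ) ≤ R := le_max_right _ _
  have hRΩ : ∀ y ∈ Ω, ‖y‖ ≤ R := by
    intro y hy
    have := hR0 hy
    rw [Metric.mem_closedBall, dist_zero_right] at this
    exact this.trans (le_max_left _ _)
  set K : ℝ := (2 * R) ^ ((d:ℝ) + 2 * s) with hKdef
  have hK0 : (0:ℝ) < K := Real.rpow_pos_of_pos (by linarith) _
  have hker : ∀ x y : EuclideanSpace ℝ (Fin d), y ∈ Ω →
      ‖x - y‖ ^ ((d:ℝ) + 2 * s) ≤ K * (1 + ‖x‖ ^ ((d:ℝ) + 2 * γ)) := by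
    intro x y hy
    have h1 : ‖x - y‖ ≤ R * (1 + ‖x‖) := by
      have h2 : ‖x - y‖ ≤ ‖x‖ + ‖y‖ := norm_sub_le x y
      have h3 := hRΩ y hy
      nlinarith [norm_nonneg x]
    calc ‖x - y‖ ^ ((d:ℝ) + 2 * s) ≤ (R * (1 + ‖x‖)) ^ ((d:ℝ) + 2 * s) :=
          Real.rpow_le_rpow (norm_nonneg _) h1 hppos.le
      _ = R ^ ((d:ℝ) + 2 * s) * (1 + ‖x‖) ^ ((d:ℝ) + 2 * s) :=
          Real.mul_rpow (by linarith) (by positivity)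
      _ ≤ R ^ ((d:ℝ) + 2 * s) * (2 ^ ((d:ℝ) + 2 * s) * (1 + ‖x‖ ^ ((d:ℝ) + 2 * γ))) := by
          have := aux_pow ((d:ℝ) + 2 * s) ((d:ℝ) + 2 * γ) ‖x‖ hppos hpq (norm_nonneg x)
          have hRp : (0:ℝ) ≤ R ^ ((d:ℝ) + 2 * s) := Real.rpow_nonneg (by linarith) _
          nlinarith
      _ = K * (1 + ‖x‖ ^ ((d:ℝ) + 2 * γ)) := by
          rw [hKdef, Real.mul_rpow (by norm_num) (by linarith)]; ring
  set c : ℝ≥0∞ := ENNReal.ofReal (Cds d s / 2) with hcdef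
  have hCds : 0 < Cds d s := aux_Cds_pos d s hs0 hs1
  have hc0 : c ≠ 0 := (ENNReal.ofReal_pos.mpr (by linarith)).ne'
  have hctop : c ≠ ⊤ := ENNReal.ofReal_ne_top
  have hμΩtop : volume Ω ≠ ⊤ := hΩb.measure_lt_top.ne
  have hμΩ0 : volume Ω ≠ 0 := hΩpos.ne'
  set W : ℝ≥0∞ := ∫⁻ x : EuclideanSpace ℝ (Fin d),
    ENNReal.ofReal ((1 + ‖x‖ ^ ((d:ℝ) + 2 * γ))⁻¹) with hWdef
  have hWlt : W < ⊤ := aux_W d _ hdq hqpos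
  set M : ℝ≥0∞ := (volume Ω)⁻¹ * (ENNReal.ofReal (2 * K) * c⁻¹ + 2 * W) with hMdef
  have hMtop : M ≠ ⊤ := by
    apply ENNReal.mul_ne_top (ENNReal.inv_ne_top.2 hμΩ0)
    apply ENNReal.add_ne_top.2
    exact ⟨ENNReal.mul_ne_top ENNReal.ofReal_ne_top (ENNReal.inv_ne_top.2 hc0),
      ENNReal.mul_ne_top (by simp) hWlt.ne⟩
  refine ⟨(M ^ (1/2 : ℝ)).toReal + 1, by positivity, ?_⟩
  intro v hv _
  set G : EuclideanSpace ℝ (Fin d) × EuclideanSpace ℝ (Fin d) → ℝ≥0∞ :=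
    fun p => ENNReal.ofReal (|v p.1 - v p.2| ^ 2 / ‖p.1 - p.2‖ ^ ((d:ℝ) + 2 * s)) with hGdef
  set F : EuclideanSpace ℝ (Fin d) → ℝ≥0∞ :=
    fun x => ENNReal.ofReal (|v x| ^ 2 / (1 + ‖x‖ ^ ((d:ℝ) + 2 * γ))) with hFdef
  set Lv : ℝ≥0∞ := ∫⁻ y in Ω, ENNReal.ofReal (v y ^ 2) with hLvdef
  set X : ℝ≥0∞ := Xsemi2 d s Ω v with hXdef
  set I : ℝ≥0∞ := ∫⁻ p in (Set.univ ×ˢ Set.univ) \ (Ωᶜ ×ˢ Ωᶜ), G p with hIdef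
  have hXeq : X = c * I := rfl
  have hGm : Measurable G := by rw [hGdef]; fun_prop
  have hFm : Measurable F := by rw [hFdef]; fun_prop
  have hwm : Measurable fun x : EuclideanSpace ℝ (Fin d) =>
      ENNReal.ofReal (2 * (1 + ‖x‖ ^ ((d:ℝ) + 2 * γ))⁻¹) := by fun_prop
  have hGym : ∀ x, Measurable fun y => G (x, y) := fun x => hGm.comp measurable_prodMk_left
  have hInner : Measurable fun x => ∫⁻ y in Ω, G (x, y) := hGm.lintegral_prod_right'
  -- pointwise bound
  have hstar : ∀ x, ∀ y ∈ Ω, F x ≤ ENNReal.ofReal (2 * K) * G (x, y) +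
      ENNReal.ofReal (2 * (1 + ‖x‖ ^ ((d:ℝ) + 2 * γ))⁻¹) * ENNReal.ofReal (v y ^ 2) := by
    intro x y hy
    rw [hFdef, hGdef]
    dsimp only
    rw [← ENNReal.ofReal_mul (by positivity), ← ENNReal.ofReal_mul (by positivity),
      ← ENNReal.ofReal_add (by positivity) (by positivity)]
    exact ENNReal.ofReal_le_ofReal
      (aux_ptwise ((d:ℝ) + 2 * s) ((d:ℝ) + 2 * γ) K v x y (hker x y hy))
  -- integrate in y over Ω
  have hstep1 : ∀ x, F x * volume Ω ≤ ENNReal.ofReal (2 * K) * (∫⁻ y in Ω, G (x, y)) +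
      ENNReal.ofReal (2 * (1 + ‖x‖ ^ ((d:ℝ) + 2 * γ))⁻¹) * Lv := by
    intro x
    have h0 : F x * volume Ω = ∫⁻ _ in Ω, F x := (setLIntegral_const Ω (F x)).symm
    rw [h0]
    calc (∫⁻ _ in Ω, F x)
        ≤ ∫⁻ y in Ω, (ENNReal.ofReal (2 * K) * G (x, y) +
            ENNReal.ofReal (2 * (1 + ‖x‖ ^ ((d:ℝ) + 2 * γ))⁻¹) * ENNReal.ofReal (v y ^ 2)) :=
          setLIntegral_mono (((hGym x).const_mul _).add (by fun_prop)) (hstar x)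
      _ = ENNReal.ofReal (2 * K) * (∫⁻ y in Ω, G (x, y)) +
            ENNReal.ofReal (2 * (1 + ‖x‖ ^ ((d:ℝ) + 2 * γ))⁻¹) * Lv := by
          rw [lintegral_add_left ((hGym x).const_mul _),
            lintegral_const_mul _ (hGym x),
            lintegral_const_mul _ (show Measurable fun y : EuclideanSpace ℝ (Fin d) =>
              ENNReal.ofReal (v y ^ 2) by fun_prop)]
  -- integrate in x
  have h2 : (∫⁻ x, F x) * volume Ω ≤
      ENNReal.ofReal (2 * K) * (∫⁻ x, ∫⁻ y in Ω, G (x, y)) + 2 * W * Lv := by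
    calc (∫⁻ x, F x) * volume Ω = ∫⁻ x, F x * volume Ω := (lintegral_mul_const _ hFm).symm
      _ ≤ ∫⁻ x, (ENNReal.ofReal (2 * K) * (∫⁻ y in Ω, G (x, y)) +
            ENNReal.ofReal (2 * (1 + ‖x‖ ^ ((d:ℝ) + 2 * γ))⁻¹) * Lv) := lintegral_mono hstep1
      _ = (∫⁻ x, ENNReal.ofReal (2 * K) * (∫⁻ y in Ω, G (x, y))) +
            ∫⁻ x, ENNReal.ofReal (2 * (1 + ‖x‖ ^ ((d:ℝ) + 2 * γ))⁻¹) * Lv :=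
          lintegral_add_left (hInner.const_mul _) _
      _ = ENNReal.ofReal (2 * K) * (∫⁻ x, ∫⁻ y in Ω, G (x, y)) + 2 * W * Lv := by
          rw [lintegral_const_mul _ hInner, lintegral_mul_const _ hwm]
          congr 1
          have hW2 : (∫⁻ x : EuclideanSpace ℝ (Fin d),
              ENNReal.ofReal (2 * (1 + ‖x‖ ^ ((d:ℝ) + 2 * γ))⁻¹)) = 2 * W := by
            simp_rw [ENNReal.ofReal_mul (by norm_num : (0:ℝ) ≤ 2)]
            rw [lintegral_const_mul _ (show Measurable fun x : EuclideanSpace ℝ (Fin d) =>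
              ENNReal.ofReal ((1 + ‖x‖ ^ ((d:ℝ) + 2 * γ))⁻¹) by fun_prop), hWdef]
            norm_num
          rw [hW2]
  -- Tonelli + monotonicity of region
  have h3 : (∫⁻ x, ∫⁻ y in Ω, G (x, y)) ≤ I := by
    have heq : (∫⁻ p in (Set.univ ×ˢ Ω), G p) = ∫⁻ x, ∫⁻ y in Ω, G (x, y) := by
      rw [Measure.volume_eq_prod, ← Measure.prod_restrict, Measure.restrict_univ]
      exact lintegral_prod _ hGm.aemeasurable
    rw [← heq, hIdef]
    apply lintegral_mono_set
    intro p hp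
    exact ⟨⟨trivial, trivial⟩, fun h => h.2 hp.2⟩
  have h4 : I = c⁻¹ * X := by
    rw [hXeq, ← mul_assoc, ENNReal.inv_mul_cancel hc0 hctop, one_mul]
  have h5 : (∫⁻ x, F x) * volume Ω ≤ (ENNReal.ofReal (2 * K) * c⁻¹ + 2 * W) * (Lv + X) := by
    calc (∫⁻ x, F x) * volume Ω
        ≤ ENNReal.ofReal (2 * K) * (∫⁻ x, ∫⁻ y in Ω, G (x, y)) + 2 * W * Lv := h2
      _ ≤ ENNReal.ofReal (2 * K) * I + 2 * W * Lv :=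
          add_le_add_left (mul_le_mul_right h3 _) _
      _ = (ENNReal.ofReal (2 * K) * c⁻¹) * X + (2 * W) * Lv := by rw [h4]; ring
      _ ≤ (ENNReal.ofReal (2 * K) * c⁻¹ + 2 * W) * X +
            (ENNReal.ofReal (2 * K) * c⁻¹ + 2 * W) * Lv :=
          add_le_add (mul_le_mul_left le_self_add _) (mul_le_mul_left le_add_self _)
      _ = (ENNReal.ofReal (2 * K) * c⁻¹ + 2 * W) * (Lv + X) := by ring
  have hVeq : Vnorm2 d s Ω v = Lv + X := rfl
  have h6 : (∫⁻ x, F x) ≤ M * Vnorm2 d s Ω v := by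
    have hid : (∫⁻ x, F x) = ((∫⁻ x, F x) * volume Ω) * (volume Ω)⁻¹ := by
      rw [mul_assoc, ENNReal.mul_inv_cancel hμΩ0 hμΩtop, mul_one]
    rw [hid, hVeq, hMdef]
    calc ((∫⁻ x, F x) * volume Ω) * (volume Ω)⁻¹
        ≤ ((ENNReal.ofReal (2 * K) * c⁻¹ + 2 * W) * (Lv + X)) * (volume Ω)⁻¹ :=
          mul_le_mul_left h5 _
      _ = ((volume Ω)⁻¹ * (ENNReal.ofReal (2 * K) * c⁻¹ + 2 * W)) * (Lv + X) := by ring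
  have h7 := ENNReal.rpow_le_rpow h6 (by norm_num : (0:ℝ) ≤ 1/2)
  rw [ENNReal.mul_rpow_of_nonneg _ _ (by norm_num : (0:ℝ) ≤ 1/2)] at h7
  refine h7.trans (mul_le_mul_left ?_ _)
  have hfin : M ^ (1/2 : ℝ) ≠ ⊤ := ENNReal.rpow_ne_top_of_nonneg (by norm_num) hMtop
  calc M ^ (1/2 : ℝ) = ENNReal.ofReal ((M ^ (1/2 : ℝ)).toReal) :=
        (ENNReal.ofReal_toReal hfin).symm
    _ ≤ ENNReal.ofReal ((M ^ (1/2 : ℝ)).toReal + 1) := ENNReal.ofReal_le_ofReal (by linarith)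
end

section
/- If $\gamma < s$, then $\mathbb{V} \nsubseteq L^2_\gamma(\mathbb{R}^d)$: there exists a measurable function $v : \mathbb{R}^d \to \mathbb{R}$ with $\|v\|_{\mathbb{V}} < \infty$ but $\int_{\mathbb{R}^d} \frac{|v(x)|^2}{1+|x|^{d+2\gamma}}\,dx = \infty$. -/
open MeasureTheory
open scoped ENNReal

open Metric Set

section AuxLemmas

variable {d : ℕ}

lemma annuli_disjoint_aux {R : ℝ} (hR0 : 0 < R) {m n : ℕ} (h : m < n) :
    Disjoint (ball (0 : EuclideanSpace ℝ (Fin d)) (R * 2 ^ (m + 1)) \ ball 0 (R * 2 ^ m))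
      (ball (0 : EuclideanSpace ℝ (Fin d)) (R * 2 ^ (n + 1)) \ ball 0 (R * 2 ^ n)) := by
  refine Set.disjoint_left.mpr fun x hxm hxn => ?_
  have h1 : ‖x‖ < R * 2 ^ (m + 1) := mem_ball_zero_iff.mp hxm.1
  have h2 : ¬ ‖x‖ < R * 2 ^ n := fun hc => hxn.2 (mem_ball_zero_iff.mpr hc)
  exact h2 (h1.trans_le (by
    have : (2:ℝ) ^ (m+1) ≤ 2 ^ n := pow_le_pow_right₀ one_le_two h
    nlinarith))

/-- Divergence lemma: a function bounded below by `(1/2)‖x‖^(-d)` outside a ball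
has infinite integral. -/
lemma lintegral_eq_top_of_ge (hd : 0 < d) (R : ℝ) (hR : 1 ≤ R)
    (f : EuclideanSpace ℝ (Fin d) → ℝ≥0∞)
    (hf : ∀ x, R ≤ ‖x‖ → ENNReal.ofReal ((1 / 2) * ‖x‖ ^ (-(d : ℝ))) ≤ f x) :
    ∫⁻ x, f x = ⊤ := by
  haveI : Nontrivial (EuclideanSpace ℝ (Fin d)) := by
    have : 0 < Module.finrank ℝ (EuclideanSpace ℝ (Fin d)) := by
      rw [finrank_euclideanSpace_fin]; exact hd
    exact Module.nontrivial_of_finrank_pos this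
  have hR0 : (0:ℝ) < R := lt_of_lt_of_le one_pos hR
  set S : ℕ → Set (EuclideanSpace ℝ (Fin d)) := fun n => ball (0 : EuclideanSpace ℝ (Fin d)) (R * 2 ^ (n+1)) \ ball 0 (R * 2 ^ n) with hS
  have hmeas : ∀ n, MeasurableSet (S n) := fun n =>
    measurableSet_ball.diff measurableSet_ball
  have hdisj : Pairwise (Function.onFun Disjoint S) := by
    intro m n hmn
    rcases lt_or_gt_of_ne hmn with h | h
    · exact annuli_disjoint_aux hR0 h
    · exact (annuli_disjoint_aux hR0 h).symm
  set v1 := volume (ball (0 : EuclideanSpace ℝ (Fin d)) 1) with hv1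
  set ε : ℝ := (1/2) * (1 - (1/2:ℝ)^d) with hε
  have hεpos : 0 < ε := by
    have : (1/2:ℝ)^d < 1 := pow_lt_one₀ (by norm_num) (by norm_num) hd.ne'
    rw [hε]; nlinarith
  have key : ∀ n : ℕ, ENNReal.ofReal ε * v1 ≤ ∫⁻ x in S n, f x := by
    intro n
    set b : ℝ := R * 2 ^ (n+1) with hb
    set a : ℝ := R * 2 ^ n with ha
    have hbpos : (0:ℝ) < b := by positivity
    have hapos : (0:ℝ) < a := by positivity
    have hab : a = b / 2 := by rw [ha, hb, pow_succ]; ring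
    have hRa : R ≤ a := by
      rw [ha]; nlinarith [one_le_pow₀ (one_le_two : (1:ℝ) ≤ 2) (n := n)]
    have hsub : a ≤ b := by rw [hab]; nlinarith
    have hball : S n = ball (0 : EuclideanSpace ℝ (Fin d)) b \ ball 0 a := rfl
    have hvol : volume (S n) = (ENNReal.ofReal (b ^ d) - ENNReal.ofReal (a ^ d)) * v1 := by
      rw [hball, measure_diff (ball_subset_ball hsub) measurableSet_ball.nullMeasurableSet
        measure_ball_lt_top.ne, Measure.addHaar_ball _ _ hbpos.le,
        Measure.addHaar_ball _ _ hapos.le, finrank_euclideanSpace_fin, ← hv1,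
        ENNReal.sub_mul (fun _ _ => measure_ball_lt_top.ne)]
    have hpt : ∀ x ∈ S n, ENNReal.ofReal ((1/2) * b ^ (-(d:ℝ))) ≤ f x := by
      intro x hx
      have hx1 : ‖x‖ < b := mem_ball_zero_iff.mp hx.1
      have hx2 : a ≤ ‖x‖ := le_of_not_gt (fun hc => hx.2 (mem_ball_zero_iff.mpr hc))
      refine le_trans ?_ (hf x (hRa.trans hx2))
      refine ENNReal.ofReal_le_ofReal ?_
      have hmono : b ^ (-(d:ℝ)) ≤ ‖x‖ ^ (-(d:ℝ)) :=
        Real.rpow_le_rpow_of_nonpos (lt_of_lt_of_le hR0 (hRa.trans hx2)) hx1.le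
          (by simp [hd.le])
      nlinarith
    calc ENNReal.ofReal ε * v1
        = ENNReal.ofReal ((1/2) * b ^ (-(d:ℝ))) * volume (S n) := by
          rw [hvol, ← mul_assoc]
          congr 1
          rw [← ENNReal.ofReal_sub _ (by positivity), ← ENNReal.ofReal_mul (by positivity)]
          congr 1
          rw [Real.rpow_neg hbpos.le, Real.rpow_natCast, hab]
          have hbd : (0:ℝ) < b^d := pow_pos hbpos d
          rw [hε, div_pow]
          field_simp
          ring
      _ ≤ ∫⁻ x in S n, f x := by
          rw [← setLIntegral_const (S n) _]
          exact setLIntegral_mono' (hmeas n) hpt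
  refine top_le_iff.mp ?_
  calc (⊤ : ℝ≥0∞) = ∑' _ : ℕ, ENNReal.ofReal ε * v1 := by
        refine (ENNReal.tsum_const_eq_top_of_ne_zero ?_).symm
        refine mul_ne_zero ?_ ?_
        · simpa using hεpos
        · exact (measure_ball_pos volume _ one_pos).ne'
    _ ≤ ∑' n, ∫⁻ x in S n, f x := ENNReal.tsum_le_tsum key
    _ = ∫⁻ x in ⋃ n, S n, f x := (lintegral_iUnion hmeas hdisj f).symm
    _ ≤ ∫⁻ x, f x := setLIntegral_le_lintegral _ _

/-- The witness function. -/
noncomputable def wfun (d : ℕ) (R γ' : ℝ) (x : EuclideanSpace ℝ (Fin d)) : ℝ :=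
  if R ≤ ‖x‖ then ‖x‖ ^ γ' else 0

lemma wfun_measurable (d : ℕ) (R γ' : ℝ) : Measurable (wfun d R γ') := by
  unfold wfun
  exact Measurable.ite (measurableSet_le measurable_const measurable_norm)
    (measurable_norm.pow_const γ') measurable_const

lemma wfun_zero {d : ℕ} {R γ' : ℝ} {x : EuclideanSpace ℝ (Fin d)} (h : ‖x‖ < R) :
    wfun d R γ' x = 0 := if_neg (not_le.mpr h)

/-- Lower pointwise bound used for divergence. -/
lemma wfun_low {d : ℕ} (hd : 0 < d) {γ γ'' γ' R : ℝ} (hγγ'' : γ ≤ γ'') (h0γ'' : 0 ≤ γ'')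
    (hγ''γ' : γ'' ≤ γ') (hR : 1 ≤ R) {x : EuclideanSpace ℝ (Fin d)} (hx : R ≤ ‖x‖) :
    (1 / 2) * ‖x‖ ^ (-(d : ℝ)) ≤
      |wfun d R γ' x| ^ 2 / (1 + ‖x‖ ^ ((d : ℝ) + 2 * γ)) := by
  set t := ‖x‖ with htdef
  have ht : 1 ≤ t := hR.trans hx
  have ht0 : (0:ℝ) < t := lt_of_lt_of_le one_pos ht
  have hw : wfun d R γ' x = t ^ γ' := if_pos hx
  have hwpos : (0:ℝ) ≤ t ^ γ' := Real.rpow_nonneg ht0.le _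
  have hden : (0:ℝ) < 1 + t ^ ((d : ℝ) + 2 * γ) := by positivity
  rw [hw, abs_of_nonneg hwpos, le_div_iff₀ hden]
  have hd0 : (0:ℝ) ≤ (d:ℝ) := Nat.cast_nonneg d
  have e1 : t ^ ((d:ℝ) + 2*γ) ≤ t ^ ((d:ℝ) + 2*γ'') :=
    Real.rpow_le_rpow_of_exponent_le ht (by linarith)
  have e2 : (1:ℝ) ≤ t ^ ((d:ℝ) + 2*γ'') := by
    calc (1:ℝ) = t ^ (0:ℝ) := (Real.rpow_zero t).symm
      _ ≤ t ^ ((d:ℝ) + 2*γ'') := Real.rpow_le_rpow_of_exponent_le ht (by linarith)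
  have h2 : t ^ (-(d:ℝ)) * t ^ ((d:ℝ) + 2*γ'') = t ^ (2*γ'') := by
    rw [← Real.rpow_add ht0]; ring_nf
  have h3 : t ^ (2*γ'') ≤ t ^ (γ' + γ') :=
    Real.rpow_le_rpow_of_exponent_le ht (by linarith)
  have h4 : (t ^ γ') ^ 2 = t ^ (γ' + γ') := by
    rw [sq, ← Real.rpow_add ht0]
  have htneg : (0:ℝ) < t ^ (-(d:ℝ)) := Real.rpow_pos_of_pos ht0 _
  calc (1/2) * t ^ (-(d:ℝ)) * (1 + t ^ ((d:ℝ) + 2*γ))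
      ≤ (1/2) * t ^ (-(d:ℝ)) * (2 * t ^ ((d:ℝ) + 2*γ'')) := by nlinarith
    _ = t ^ (-(d:ℝ)) * t ^ ((d:ℝ) + 2*γ'') := by ring
    _ = t ^ (2*γ'') := h2
    _ ≤ t ^ (γ' + γ') := h3
    _ = (t ^ γ') ^ 2 := h4.symm

/-- Upper pointwise bound used for finiteness of the `𝕏`-seminorm. -/
lemma wfun_up {d : ℕ} {s γ' R : ℝ} (hs0 : 0 < s) (hγ'0 : 0 < γ') (hR : 1 ≤ R)
    {x : EuclideanSpace ℝ (Fin d)} (hx : ‖x‖ ≤ R / 2) (y : EuclideanSpace ℝ (Fin d)) :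
    |wfun d R γ' x - wfun d R γ' y| ^ 2 / ‖x - y‖ ^ ((d : ℝ) + 2 * s) ≤
      (4:ℝ) ^ ((d : ℝ) + 2 * s) * (1 + ‖y‖) ^ (-((d : ℝ) + 2 * s - 2 * γ')) := by
  have hR0 : (0:ℝ) < R := lt_of_lt_of_le one_pos hR
  have hvx : wfun d R γ' x = 0 := wfun_zero (by linarith)
  set e : ℝ := (d:ℝ) + 2*s with hedef
  have hd0 : (0:ℝ) ≤ (d:ℝ) := Nat.cast_nonneg d
  have he0 : (0:ℝ) < e := by rw [hedef]; linarith
  by_cases hy : R ≤ ‖y‖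
  · set u : ℝ := 1 + ‖y‖ with hudef
    have hy1 : (1:ℝ) ≤ ‖y‖ := hR.trans hy
    have hu0 : (0:ℝ) < u := by rw [hudef]; linarith
    have hu2 : u ≤ 2 * ‖y‖ := by rw [hudef]; linarith
    have hvy : wfun d R γ' y = ‖y‖ ^ γ' := if_pos hy
    -- numerator bound
    have hnum : |wfun d R γ' x - wfun d R γ' y| ^ 2 ≤ (u ^ γ') ^ 2 := by
      rw [hvx, hvy, zero_sub, abs_neg, abs_of_nonneg (Real.rpow_nonneg (norm_nonneg y) _)]
      have : ‖y‖ ^ γ' ≤ u ^ γ' :=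
        Real.rpow_le_rpow (norm_nonneg y) (by rw [hudef]; linarith) hγ'0.le
      exact pow_le_pow_left₀ (Real.rpow_nonneg (norm_nonneg y) _) this 2
    -- denominator bound
    have hdist : u / 4 ≤ ‖x - y‖ := by
      have h1 : ‖y‖ - ‖x‖ ≤ ‖x - y‖ := by
        rw [norm_sub_rev]; exact norm_sub_norm_le y x
      linarith
    have hden : (u/4) ^ e ≤ ‖x - y‖ ^ e :=
      Real.rpow_le_rpow (by positivity) hdist he0.le
    have hdpos : (0:ℝ) < (u/4) ^ e := Real.rpow_pos_of_pos (by positivity) _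
    calc |wfun d R γ' x - wfun d R γ' y| ^ 2 / ‖x - y‖ ^ e
        ≤ (u ^ γ') ^ 2 / (u/4) ^ e :=
          div_le_div₀ (by positivity) hnum hdpos hden
      _ = (4:ℝ) ^ e * u ^ (-(e - 2*γ')) := by
          rw [Real.div_rpow hu0.le (by norm_num : (0:ℝ) ≤ 4), ← Real.rpow_natCast (u ^ γ') 2,
            ← Real.rpow_mul hu0.le, div_div_eq_mul_div, mul_comm, mul_div_assoc,
            ← Real.rpow_sub hu0, neg_sub]
          norm_num
          left
          ring_nf
  · have hvy : wfun d R γ' y = 0 := wfun_zero (not_le.mp hy)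
    rw [hvx, hvy]
    simp only [sub_zero, abs_zero]
    rw [zero_pow (by norm_num), zero_div]
    positivity

lemma xsemi_integral_finite (d : ℕ) {s γ' R : ℝ} (hs : s ∈ Set.Ioo (0:ℝ) 1)
    (hγ'0 : 0 < γ') (hγ's : γ' < s) (hR : 1 ≤ R)
    (Ω : Set (EuclideanSpace ℝ (Fin d))) (hΩm : MeasurableSet Ω)
    (hΩvol : volume Ω ≠ ⊤) (hΩR : ∀ x ∈ Ω, ‖x‖ ≤ R / 2) :
    ∫⁻ p in (Set.univ ×ˢ Set.univ) \ (Ωᶜ ×ˢ Ωᶜ),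
      ENNReal.ofReal (|wfun d R γ' p.1 - wfun d R γ' p.2| ^ 2 /
        ‖p.1 - p.2‖ ^ ((d : ℝ) + 2 * s)) < ⊤ := by
  set v := wfun d R γ' with hv
  set F : EuclideanSpace ℝ (Fin d) × EuclideanSpace ℝ (Fin d) → ℝ≥0∞ :=
    fun p => ENNReal.ofReal (|v p.1 - v p.2| ^ 2 / ‖p.1 - p.2‖ ^ ((d : ℝ) + 2 * s)) with hF
  have hvm : Measurable v := wfun_measurable d R γ'
  have hFm : Measurable F := by
    apply ENNReal.measurable_ofReal.comp
    have h1 : Measurable fun p : EuclideanSpace ℝ (Fin d) × EuclideanSpace ℝ (Fin d) =>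
        |v p.1 - v p.2| ^ 2 :=
      ((hvm.comp measurable_fst).sub (hvm.comp measurable_snd)).abs.pow_const 2
    have h2 : Measurable fun p : EuclideanSpace ℝ (Fin d) × EuclideanSpace ℝ (Fin d) =>
        ‖p.1 - p.2‖ ^ ((d : ℝ) + 2 * s) :=
      (measurable_fst.sub measurable_snd).norm.pow_const _
    exact h1.div h2
  set r : ℝ := (d:ℝ) + 2*s - 2*γ' with hr
  set K : ℝ≥0∞ := ∫⁻ y : EuclideanSpace ℝ (Fin d), ENNReal.ofReal ((4:ℝ) ^ ((d:ℝ)+2*s) * (1 + ‖y‖) ^ (-r)) with hK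
  have hM0 : (0:ℝ) ≤ (4:ℝ) ^ ((d:ℝ)+2*s) := Real.rpow_nonneg (by norm_num) _
  have hKlt : K < ⊤ := by
    rw [hK]
    simp_rw [ENNReal.ofReal_mul hM0]
    rw [lintegral_const_mul' _ _ ENNReal.ofReal_ne_top]
    apply ENNReal.mul_lt_top ENNReal.ofReal_lt_top
    have hfin : ((Module.finrank ℝ (EuclideanSpace ℝ (Fin d))) : ℝ) < r := by
      rw [finrank_euclideanSpace_fin, hr]; linarith
    exact finite_integral_one_add_norm hfin
  have hmain : ∫⁻ z, F z ∂((volume.restrict Ω).prod volume) ≤ K * volume Ω := by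
    rw [lintegral_prod F hFm.aemeasurable]
    calc ∫⁻ x in Ω, ∫⁻ y, F (x, y)
        ≤ ∫⁻ _ in Ω, K := by
          refine setLIntegral_mono' hΩm fun x hx => lintegral_mono fun y => ?_
          exact ENNReal.ofReal_le_ofReal (wfun_up hs.1 hγ'0 hR (hΩR x hx) y)
      _ = K * volume Ω := setLIntegral_const Ω K
  have hswap : ∀ p : EuclideanSpace ℝ (Fin d) × EuclideanSpace ℝ (Fin d), F p.swap = F p := by
    intro p
    simp only [hF, Prod.fst_swap, Prod.snd_swap]
    rw [abs_sub_comm, norm_sub_rev]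
  have hT1 : ∫⁻ p in Ω ×ˢ Set.univ, F p ≤ K * volume Ω := by
    rw [Measure.volume_eq_prod, ← Measure.prod_restrict, Measure.restrict_univ]
    exact hmain
  have hT2 : ∫⁻ p in Set.univ ×ˢ Ω, F p ≤ K * volume Ω := by
    rw [Measure.volume_eq_prod, ← Measure.prod_restrict, Measure.restrict_univ]
    calc ∫⁻ z, F z ∂(volume.prod (volume.restrict Ω))
        = ∫⁻ z, F z.swap ∂((volume.restrict Ω).prod volume) := by
          rw [lintegral_prod_swap]
      _ = ∫⁻ z, F z ∂((volume.restrict Ω).prod volume) := by simp_rw [hswap]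
      _ ≤ K * volume Ω := hmain
  have hDsub : (Set.univ ×ˢ Set.univ) \ (Ωᶜ ×ˢ Ωᶜ) ⊆ (Ω ×ˢ Set.univ) ∪ (Set.univ ×ˢ Ω) := by
    rintro ⟨x, y⟩ ⟨-, hp⟩
    by_cases hx : x ∈ Ω
    · exact Or.inl ⟨hx, Set.mem_univ _⟩
    · have hy : y ∈ Ω := by
        by_contra hy
        exact hp ⟨hx, hy⟩
      exact Or.inr ⟨Set.mem_univ _, hy⟩
  calc ∫⁻ p in (Set.univ ×ˢ Set.univ) \ (Ωᶜ ×ˢ Ωᶜ), F p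
      ≤ ∫⁻ p in (Ω ×ˢ Set.univ) ∪ (Set.univ ×ˢ Ω), F p := lintegral_mono_set hDsub
    _ ≤ (∫⁻ p in Ω ×ˢ Set.univ, F p) + ∫⁻ p in Set.univ ×ˢ Ω, F p :=
        lintegral_union_le _ _ _
    _ ≤ K * volume Ω + K * volume Ω := add_le_add hT1 hT2
    _ < ⊤ := ENNReal.add_lt_top.mpr
        ⟨ENNReal.mul_lt_top hKlt hΩvol.lt_top, ENNReal.mul_lt_top hKlt hΩvol.lt_top⟩

end AuxLemmas

/-- If `γ < s`, then `𝕍 ⊄ L²_γ(ℝᵈ)`: there is a measurable `v` with `‖v‖_𝕍 < ∞` but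
infinite weighted `L²` norm. -/
theorem not_embedded_below_critical (d : ℕ) (hd : 0 < d) (s γ : ℝ)
    (hs : s ∈ Set.Ioo (0 : ℝ) 1) (hγ : γ < s)
    (Ω : Set (EuclideanSpace ℝ (Fin d))) (hΩb : Bornology.IsBounded Ω)
    (hΩm : MeasurableSet Ω) (hΩpos : 0 < volume Ω) :
    ∃ v : EuclideanSpace ℝ (Fin d) → ℝ, Measurable v ∧ Vnorm2 d s Ω v < ⊤ ∧
      (∫⁻ x, ENNReal.ofReal (|v x| ^ 2 / (1 + ‖x‖ ^ ((d : ℝ) + 2 * γ)))) = ⊤ := by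
  obtain ⟨R₀, hR₀⟩ : ∃ R₀, Ω ⊆ closedBall 0 R₀ := hΩb.subset_closedBall 0
  set R : ℝ := max 1 (2 * |R₀|) with hRdef
  have hR : 1 ≤ R := le_max_left _ _
  have hΩR : ∀ x ∈ Ω, ‖x‖ ≤ R / 2 := by
    intro x hx
    have h1 : ‖x‖ ≤ R₀ := mem_closedBall_zero_iff.mp (hR₀ hx)
    have h2 : R₀ ≤ |R₀| := le_abs_self _
    have h3 : 2 * |R₀| ≤ R := le_max_right _ _
    linarith
  set γ'' : ℝ := max γ 0 with hγ''def
  set γ' : ℝ := (γ'' + s) / 2 with hγ'def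
  have h0γ'' : 0 ≤ γ'' := le_max_right _ _
  have hγγ'' : γ ≤ γ'' := le_max_left _ _
  have hγ''s : γ'' < s := max_lt hγ hs.1
  have hγ'0 : 0 < γ' := by rw [hγ'def]; linarith [hs.1]
  have hγ's : γ' < s := by rw [hγ'def]; linarith
  have hγ''γ' : γ'' ≤ γ' := by rw [hγ'def]; linarith
  refine ⟨wfun d R γ', wfun_measurable d R γ', ?_, ?_⟩
  · rw [Vnorm2]
    have h1 : (∫⁻ x in Ω, ENNReal.ofReal (wfun d R γ' x ^ 2)) = 0 := by
      have hz : ∀ x ∈ Ω, ENNReal.ofReal (wfun d R γ' x ^ 2) = (0 : ℝ≥0∞) := by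
        intro x hx
        rw [wfun_zero (lt_of_le_of_lt (hΩR x hx) (by linarith))]
        simp
      rw [setLIntegral_congr_fun_ae hΩm (MeasureTheory.ae_of_all _ hz)]
      exact lintegral_zero
    rw [h1, zero_add, Xsemi2]
    exact ENNReal.mul_lt_top ENNReal.ofReal_lt_top
      (xsemi_integral_finite d hs hγ'0 hγ's hR Ω hΩm hΩb.measure_lt_top.ne hΩR)
  · refine lintegral_eq_top_of_ge hd R hR _ ?_
    intro x hx
    exact ENNReal.ofReal_le_ofReal (wfun_low hd hγγ'' h0γ'' hγ''γ' hR hx)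
end
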